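/- Let A = [0,R]² be the square of side R > 0, let λ > 0, and let γ : [0,∞) → ℝ be a bounded measurable function. Then (1/|λA|²)·∫_{λA×λA} γ(‖s − t‖) ds dt = ∫_0^{√2·R} f_square(h,R)·γ(λh) dh, where λA = {λx : x ∈ A} and ‖·‖ is the Euclidean norm. -/

import Mathlib

open MeasureTheory Pointwise

/-- Density of the distance between two independent uniform points in a square
of side `R`. -/
noncomputable def fsquare (h R : ℝ) : ℝ :=
  if h ≤ R then
    2 * Real.pi * h / R ^ 2 - 8 * h ^ 2 / R ^ 3 + 2 * h ^ 3 / R ^ 4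
  else
    (2 * h / R ^ 2) *
      (-2 - h ^ 2 / R ^ 2 + 3 * Real.sqrt (h ^ 2 / R ^ 2 - 1)
        + (h ^ 2 / R ^ 2 + 1) / Real.sqrt (h ^ 2 / R ^ 2 - 1)
        + 2 * Real.arcsin ((2 - h ^ 2 / R ^ 2) / (h ^ 2 / R ^ 2))
        - 4 / ((h ^ 2 / R ^ 2) *
            Real.sqrt (1 - (2 - h ^ 2 / R ^ 2) ^ 2 / (h ^ 2 / R ^ 2) ^ 2)))

/-- The square `[0,R]² ⊂ ℝ²`. -/
def squareRegion (R : ℝ) : Set (EuclideanSpace ℝ (Fin 2)) :=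
  {x | x 0 ∈ Set.Icc 0 R ∧ x 1 ∈ Set.Icc 0 R}

open Set Real intervalIntegral

noncomputable def sTf (a u : ℝ) : ℝ := max (a - |u|) 0

lemma sTf_nonneg (a u : ℝ) : 0 ≤ sTf a u := le_max_right _ _

lemma sTf_cont (a : ℝ) : Continuous (sTf a) :=
  (continuous_const.sub continuous_abs).max continuous_const

lemma sTf_le {a : ℝ} (ha : 0 ≤ a) (u : ℝ) : sTf a u ≤ a :=
  max_le (by linarith [abs_nonneg u]) ha

lemma sTf_abs_le {a : ℝ} (ha : 0 ≤ a) (u : ℝ) : |sTf a u| ≤ a := by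
  rw [abs_of_nonneg (sTf_nonneg a u)]; exact sTf_le ha u

lemma sTf_eq_zero {a u : ℝ} (h : a ≤ |u|) : sTf a u = 0 := max_eq_right (by linarith)

lemma sTf_eq {a u : ℝ} (h : |u| ≤ a) : sTf a u = a - |u| := max_eq_left (by linarith)

lemma st10_integrable {α : Type*} [MeasurableSpace α] {μ : Measure α} [IsFiniteMeasure μ]
    {f : α → ℝ} (hm : AEStronglyMeasurable f μ) {M : ℝ} (hb : ∀ x, |f x| ≤ M) :
    Integrable f μ :=
  Integrable.mono' (integrable_const M) hm (ae_of_all _ fun x => by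
    simpa [Real.norm_eq_abs] using hb x)

lemma st10_integrableOn {α : Type*} [MeasurableSpace α] {μ : Measure α} {s : Set α}
    (hs : μ s ≠ ⊤) (hsm : MeasurableSet s) {f : α → ℝ}
    (hm : AEStronglyMeasurable f (μ.restrict s)) {M : ℝ} (hb : ∀ x ∈ s, |f x| ≤ M) :
    IntegrableOn f s μ := by
  haveI : IsFiniteMeasure (μ.restrict s) :=
    ⟨by rwa [Measure.restrict_apply_univ, lt_top_iff_ne_top]⟩
  exact Integrable.mono' (integrable_const M) hm
    ((ae_restrict_mem hsm).mono (fun x hx => by simpa [Real.norm_eq_abs] using hb x hx))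

lemma st10_vol_inter {a : ℝ} (ha : 0 ≤ a) (u : ℝ) :
    (volume (Ico u (u + a) ∩ Icc 0 a)).toReal = sTf a u := by
  have h1 : volume (Ico u (u + a) ∩ Icc 0 a) = ENNReal.ofReal (min (u + a) a - max u 0) := by
    apply le_antisymm
    · have hsub : Ico u (u + a) ∩ Icc 0 a ⊆ Icc (max u 0) (min (u + a) a) := by
        rintro x ⟨⟨hx1, hx2⟩, hx3, hx4⟩
        exact ⟨max_le hx1 hx3, le_min hx2.le hx4⟩
      calc volume _ ≤ volume (Icc (max u 0) (min (u + a) a)) := measure_mono hsub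
        _ = ENNReal.ofReal (min (u + a) a - max u 0) := Real.volume_Icc
    · have hsub : Ico (max u 0) (min (u + a) a) ⊆ Ico u (u + a) ∩ Icc 0 a := by
        rintro x ⟨hx1, hx2⟩
        refine ⟨⟨le_trans (le_max_left _ _) hx1, lt_of_lt_of_le hx2 (min_le_left _ _)⟩,
          le_trans (le_max_right _ _) hx1, (lt_of_lt_of_le hx2 (min_le_right _ _)).le⟩
      calc ENNReal.ofReal (min (u + a) a - max u 0) = volume (Ico (max u 0) (min (u + a) a)) :=
            Real.volume_Ico.symm
        _ ≤ _ := measure_mono hsub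
  rw [h1]
  have h2 : ∀ d : ℝ, (ENNReal.ofReal d).toReal = max d 0 := by
    intro d
    rcases le_total 0 d with h | h
    · rw [ENNReal.toReal_ofReal h, max_eq_left h]
    · rw [ENNReal.ofReal_eq_zero.2 h, max_eq_right h]; rfl
  rw [h2]
  rcases le_total u 0 with h | h
  · rw [min_eq_left (by linarith), max_eq_right h, sTf, abs_of_nonpos h]
    ring_nf
  · rw [min_eq_right (by linarith), max_eq_left h, sTf, abs_of_nonneg h]

/-- One-dimensional smoothing: double integral of `φ (x - y)` over a square is the
integral of `φ` against the triangular kernel. -/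
lemma st10_smooth (a : ℝ) (ha : 0 < a) (φ : ℝ → ℝ) (hφ : Measurable φ) (M : ℝ)
    (hb : ∀ x, |φ x| ≤ M) :
    ∫ x in Icc (0:ℝ) a, (∫ y in Icc (0:ℝ) a, φ (x - y)) = ∫ u, sTf a u * φ u := by
  haveI : IsFiniteMeasure (volume.restrict (Icc (0:ℝ) a)) :=
    ⟨by rw [Measure.restrict_apply_univ]; simp [Real.volume_Icc]⟩
  have hinner : ∀ x : ℝ, (∫ y in Icc (0:ℝ) a, φ (x - y)) = ∫ u, (Ioc (x - a) x).indicator φ u := by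
    intro x
    rw [MeasureTheory.integral_Icc_eq_integral_Ioc, ← intervalIntegral.integral_of_le ha.le,
      intervalIntegral.integral_comp_sub_left (fun u => φ u) x, sub_zero,
      intervalIntegral.integral_of_le (by linarith), MeasureTheory.integral_indicator measurableSet_Ioc]
  simp_rw [hinner]
  have hE : MeasurableSet {z : ℝ × ℝ | z.1 - a < z.2 ∧ z.2 ≤ z.1} := by
    have : {z : ℝ × ℝ | z.1 - a < z.2 ∧ z.2 ≤ z.1}
        = {z : ℝ × ℝ | z.1 - a < z.2} ∩ {z : ℝ × ℝ | z.2 ≤ z.1} := rfl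
    rw [this]
    exact (measurableSet_lt (measurable_fst.sub measurable_const) measurable_snd).inter
      (measurableSet_le measurable_snd measurable_fst)
  have hbox : MeasurableSet ((Icc (0:ℝ) a) ×ˢ (Icc (-a) a)) :=
    measurableSet_Icc.prod measurableSet_Icc
  have hswap : ∫ x in Icc (0:ℝ) a, ∫ u, (Ioc (x - a) x).indicator φ u
      = ∫ u, ∫ x in Icc (0:ℝ) a, (Ioc (x - a) x).indicator φ u := by
    apply MeasureTheory.integral_integral_swap
    have heq : (Function.uncurry fun x u => (Ioc (x - a) x).indicator φ u)
        = ({z : ℝ × ℝ | z.1 - a < z.2 ∧ z.2 ≤ z.1}).indicator (fun z => φ z.2) := by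
      funext z
      rcases z with ⟨x, u⟩
      simp only [Function.uncurry, Set.indicator, mem_Ioc, mem_setOf_eq]
    rw [heq]
    have hae : ∀ᵐ z : ℝ × ℝ ∂((volume.restrict (Icc (0:ℝ) a)).prod volume),
        z.1 ∈ Icc (0:ℝ) a := by
      rw [ae_iff]
      refine measure_mono_null (fun z hz => ?_) (show ((volume.restrict (Icc (0:ℝ) a)).prod volume)
        ((Icc (0:ℝ) a)ᶜ ×ˢ (univ : Set ℝ)) = 0 from ?_)
      · exact ⟨hz, mem_univ _⟩
      · rw [Measure.prod_prod, Measure.restrict_apply measurableSet_Icc.compl]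
        simp
    have hgint : Integrable
        ((({z : ℝ × ℝ | z.1 - a < z.2 ∧ z.2 ≤ z.1}) ∩ ((Icc (0:ℝ) a) ×ˢ (Icc (-a) a))).indicator
          (fun z => φ z.2)) ((volume.restrict (Icc (0:ℝ) a)).prod volume) := by
      rw [integrable_indicator_iff (hE.inter hbox)]
      apply IntegrableOn.mono_set _ inter_subset_right
      apply st10_integrableOn _ hbox ((hφ.comp measurable_snd).aestronglyMeasurable)
        (fun z _ => hb z.2)
      rw [Measure.prod_prod]
      exact ENNReal.mul_ne_top (measure_ne_top _ _) (by simp [Real.volume_Icc])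
    apply hgint.congr
    filter_upwards [hae] with z hz
    by_cases hzE : z ∈ {z : ℝ × ℝ | z.1 - a < z.2 ∧ z.2 ≤ z.1}
    · have hz2 : z.2 ∈ Icc (-a) a := by
        obtain ⟨h1, h2⟩ := hzE
        obtain ⟨h3, h4⟩ := hz
        exact ⟨by linarith, by linarith⟩
      rw [indicator_of_mem (mem_inter hzE (Set.mem_prod.2 ⟨hz, hz2⟩)), indicator_of_mem hzE]
    · rw [indicator_of_notMem (fun h => hzE h.1), indicator_of_notMem hzE]
  rw [hswap]
  apply MeasureTheory.integral_congr_ae (ae_of_all _ ?_)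
  intro u
  have h1 : ∀ x : ℝ, (Ioc (x - a) x).indicator φ u = (Ico u (u + a)).indicator (fun _ => φ u) x := by
    intro x
    simp only [Set.indicator, mem_Ioc, mem_Ico]
    exact if_congr ⟨fun ⟨p, q⟩ => ⟨q, by linarith⟩, fun ⟨p, q⟩ => ⟨by linarith, p⟩⟩ rfl rfl
  simp_rw [h1]
  rw [MeasureTheory.integral_indicator measurableSet_Ico, setIntegral_const,
    measureReal_restrict_apply measurableSet_Ico, measureReal_def, st10_vol_inter ha.le u, smul_eq_mul]

noncomputable def st10map : EuclideanSpace ℝ (Fin 2) ≃ᵐ ℝ × ℝ :=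
  (MeasurableEquiv.toLp 2 (Fin 2 → ℝ)).symm.trans (MeasurableEquiv.piFinTwo fun _ => ℝ)

lemma st10map_mp : MeasurePreserving st10map :=
  (EuclideanSpace.volume_preserving_symm_measurableEquiv_toLp (Fin 2)).trans
    (volume_preserving_piFinTwo fun _ => ℝ)

lemma st10map_apply (x : EuclideanSpace ℝ (Fin 2)) : st10map x = (x 0, x 1) := rfl

lemma st10_sq_preimage (a : ℝ) : squareRegion a = st10map ⁻¹' (Icc 0 a ×ˢ Icc 0 a) := by
  ext x
  simp only [squareRegion, mem_setOf_eq, mem_preimage, st10map_apply, Set.mem_prod, mem_Icc]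

lemma st10_norm_symm (p q : ℝ × ℝ) :
    ‖st10map.symm p - st10map.symm q‖ = Real.sqrt ((p.1 - q.1) ^ 2 + (p.2 - q.2) ^ 2) := by
  rw [EuclideanSpace.norm_eq]
  have h0 : ∀ p : ℝ × ℝ, (st10map.symm p) 0 = p.1 := fun _ => rfl
  have h1 : ∀ p : ℝ × ℝ, (st10map.symm p) 1 = p.2 := fun _ => rfl
  simp [Fin.sum_univ_two, PiLp.sub_apply, h0, h1, sq_abs]

lemma st10_vol_square {a : ℝ} (ha : 0 ≤ a) :
    volume (squareRegion a) = ENNReal.ofReal a * ENNReal.ofReal a := by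
  rw [st10_sq_preimage,
    st10map_mp.measure_preimage ((measurableSet_Icc.prod measurableSet_Icc)).nullMeasurableSet]
  rw [Measure.volume_eq_prod, Measure.prod_prod, Real.volume_Icc]
  simp

lemma st10_smul_square {l R : ℝ} (hl : 0 < l) :
    l • squareRegion R = squareRegion (l * R) := by
  have key : ∀ t : ℝ, (0 ≤ l⁻¹ * t ∧ l⁻¹ * t ≤ R) ↔ (0 ≤ t ∧ t ≤ l * R) := by
    intro t
    have h1 : 0 < l⁻¹ := inv_pos.2 hl
    have h2 : l * l⁻¹ = 1 := mul_inv_cancel₀ hl.ne'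
    constructor
    · rintro ⟨u, v⟩; constructor <;> nlinarith
    · rintro ⟨u, v⟩; constructor <;> nlinarith
  ext x
  rw [Set.mem_smul_set_iff_inv_smul_mem₀ hl.ne']
  simp only [squareRegion, mem_setOf_eq, mem_Icc, PiLp.smul_apply, smul_eq_mul]
  rw [key, key]

/-- the product of the two triangular kernels vanishes for radii beyond `√2 a`. -/
lemma st10_Tzero {a r : ℝ} (ha : 0 < a) (hr : Real.sqrt 2 * a ≤ r) (θ : ℝ) :
    sTf a (r * Real.cos θ) * sTf a (r * Real.sin θ) = 0 := by
  have hr0 : 0 ≤ r := le_trans (by positivity) hr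
  have hr2 : 2 * a ^ 2 ≤ r ^ 2 := by
    have h := pow_le_pow_left₀ (by positivity : (0:ℝ) ≤ Real.sqrt 2 * a) hr 2
    rw [mul_pow, Real.sq_sqrt (by norm_num : (0:ℝ) ≤ 2)] at h
    linarith
  by_cases h1 : a ≤ |r * Real.cos θ|
  · rw [sTf_eq_zero h1, zero_mul]
  · push_neg at h1
    have h2 : a ≤ |r * Real.sin θ| := by
      nlinarith [sq_abs (r * Real.cos θ), sq_abs (r * Real.sin θ),
        Real.sin_sq_add_cos_sq θ, abs_nonneg (r * Real.sin θ), abs_nonneg (r * Real.cos θ)]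
    rw [sTf_eq_zero h2, mul_zero]

/-- antiderivative for the angular integral -/
lemma st10_hasDeriv (a r θ : ℝ) :
    HasDerivAt (fun t => a ^ 2 * t - a * r * Real.sin t + a * r * Real.cos t
      + r ^ 2 * Real.sin t ^ 2 / 2)
      ((a - r * Real.cos θ) * (a - r * Real.sin θ)) θ := by
  have h1 := Real.hasDerivAt_sin θ
  have h2 := Real.hasDerivAt_cos θ
  have h3 : HasDerivAt (fun t : ℝ => a ^ 2 * t) (a ^ 2) θ := by
    simpa using (hasDerivAt_id θ).const_mul (a ^ 2)
  have h4 := (h1.const_mul (a * r))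
  have h5 := (h2.const_mul (a * r))
  have h6 := ((h1.pow 2).const_mul (r ^ 2)).div_const 2
  refine (((h3.sub h4).add h5).add h6).congr_deriv ?_
  norm_num
  ring

/-- the inner quarter integral, case r ≤ a -/
lemma st10_I1 {a r : ℝ} (ha : 0 < a) (hr0 : 0 < r) (hra : r ≤ a) :
    ∫ θ in (0:ℝ)..(π/2), sTf a (r * Real.cos θ) * sTf a (r * Real.sin θ)
      = a ^ 2 * (π / 2) - 2 * a * r + r ^ 2 / 2 := by
  have hpi : (0:ℝ) < π := pi_pos
  have hcong : EqOn (fun θ => sTf a (r * Real.cos θ) * sTf a (r * Real.sin θ))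
      (fun θ => (a - r * Real.cos θ) * (a - r * Real.sin θ)) (uIcc 0 (π/2)) := by
    intro θ hθ
    rw [uIcc_of_le (by linarith)] at hθ
    obtain ⟨h0, h1⟩ := hθ
    have hc0 : 0 ≤ Real.cos θ := Real.cos_nonneg_of_mem_Icc ⟨by linarith, h1⟩
    have hs0 : 0 ≤ Real.sin θ := Real.sin_nonneg_of_nonneg_of_le_pi h0 (by linarith)
    have hc1 : Real.cos θ ≤ 1 := Real.cos_le_one θ
    have hs1 : Real.sin θ ≤ 1 := Real.sin_le_one θ
    have e1 : |r * Real.cos θ| = r * Real.cos θ := abs_of_nonneg (by positivity)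
    have e2 : |r * Real.sin θ| = r * Real.sin θ := abs_of_nonneg (by positivity)
    simp only
    rw [sTf_eq (by rw [e1]; nlinarith), sTf_eq (by rw [e2]; nlinarith), e1, e2]
  rw [intervalIntegral.integral_congr hcong,
    intervalIntegral.integral_eq_sub_of_hasDerivAt (fun θ _ => st10_hasDeriv a r θ)
      (((continuous_const.sub (continuous_const.mul Real.continuous_cos)).mul
        (continuous_const.sub (continuous_const.mul Real.continuous_sin))).intervalIntegrable _ _)]
  simp [Real.sin_pi_div_two, Real.cos_pi_div_two]
  ring

set_option maxHeartbeats 1000000 in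
/-- the inner quarter integral, middle case -/
lemma st10_I2 {a r : ℝ} (ha : 0 < a) (har : a < r) (hr2 : r ≤ Real.sqrt 2 * a) :
    ∫ θ in (0:ℝ)..(π/2), sTf a (r * Real.cos θ) * sTf a (r * Real.sin θ)
      = a ^ 2 * (2 * Real.arcsin (a / r) - π / 2) - a ^ 2
        + 2 * a * Real.sqrt (r ^ 2 - a ^ 2) - r ^ 2 / 2 := by
  have hpi : (0:ℝ) < π := pi_pos
  have hr0 : 0 < r := lt_trans ha har
  set k := a / r with hk
  have hk0 : 0 < k := div_pos ha hr0
  have hk1 : k < 1 := (div_lt_one hr0).2 har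
  set α := Real.arccos k with hα
  set β := Real.arcsin k with hβ
  have hαdef : α = π/2 - β := Real.arccos_eq_pi_div_two_sub_arcsin k
  have hβ2 : β ≤ π/2 := Real.arcsin_le_pi_div_two k
  have hβ4 : π/4 ≤ β := by
    have h24 : Real.arcsin (Real.sqrt 2 / 2) = π/4 := by
      rw [← Real.sin_pi_div_four, Real.arcsin_sin (by linarith) (by linarith)]
    have h2 : Real.sqrt 2 / 2 ≤ k := by
      rw [hk, div_le_div_iff₀ (by norm_num) hr0]
      nlinarith [Real.sq_sqrt (by norm_num : (0:ℝ) ≤ 2), Real.sqrt_nonneg 2]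
    rw [← h24]
    exact Real.monotone_arcsin h2
  have hαβ : α ≤ β := by rw [hαdef]; linarith
  have hα0 : 0 ≤ α := Real.arccos_nonneg k
  have hβ0 : 0 ≤ β := by linarith
  have hcosα : Real.cos α = k := Real.cos_arccos (by linarith) hk1.le
  have hsinβ : Real.sin β = k := Real.sin_arcsin (by linarith) hk1.le
  have hs2 : Real.sqrt (r ^ 2 - a ^ 2) ^ 2 = r ^ 2 - a ^ 2 :=
    Real.sq_sqrt (by nlinarith)
  have hsq : Real.sqrt (1 - k ^ 2) = Real.sqrt (r ^ 2 - a ^ 2) / r := by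
    rw [show (1:ℝ) - k ^ 2 = (r ^ 2 - a ^ 2) / r ^ 2 by rw [hk]; field_simp,
      Real.sqrt_div (by nlinarith) (r ^ 2), Real.sqrt_sq hr0.le]
  have hcosβ : Real.cos β = Real.sqrt (r ^ 2 - a ^ 2) / r := by
    rw [hβ, Real.cos_arcsin, hsq]
  have hsinα : Real.sin α = Real.sqrt (r ^ 2 - a ^ 2) / r := by
    rw [hα, Real.sin_arccos, hsq]
  set g := fun θ => sTf a (r * Real.cos θ) * sTf a (r * Real.sin θ) with hg
  have gc : Continuous g :=
    ((sTf_cont a).comp (continuous_const.mul Real.continuous_cos)).mul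
      ((sTf_cont a).comp (continuous_const.mul Real.continuous_sin))
  have hsplit : ∫ θ in (0:ℝ)..(π/2), g θ
      = (∫ θ in (0:ℝ)..α, g θ) + ((∫ θ in α..β, g θ) + ∫ θ in β..(π/2), g θ) := by
    rw [intervalIntegral.integral_add_adjacent_intervals (gc.intervalIntegrable _ _)
      (gc.intervalIntegrable _ _),
      intervalIntegral.integral_add_adjacent_intervals (gc.intervalIntegrable _ _)
      (gc.intervalIntegrable _ _)]
  have hrk : r * k = a := by rw [hk]; field_simp
  have z1 : ∫ θ in (0:ℝ)..α, g θ = 0 := by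
    have hz : EqOn g (fun _ => (0:ℝ)) (uIcc 0 α) := by
      intro θ hθ
      rw [uIcc_of_le hα0] at hθ
      obtain ⟨h0, h1⟩ := hθ
      have hc : k ≤ Real.cos θ := by
        rw [← hcosα]
        exact Real.cos_le_cos_of_nonneg_of_le_pi h0 (by linarith) h1
      have : a ≤ |r * Real.cos θ| := by
        calc a = r * k := hrk.symm
          _ ≤ r * Real.cos θ := by nlinarith
          _ ≤ |r * Real.cos θ| := le_abs_self _
      rw [hg]
      simp only
      rw [sTf_eq_zero this, zero_mul]
    rw [intervalIntegral.integral_congr hz]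
    simp
  have z3 : ∫ θ in β..(π/2), g θ = 0 := by
    have hz : EqOn g (fun _ => (0:ℝ)) (uIcc β (π/2)) := by
      intro θ hθ
      rw [uIcc_of_le hβ2] at hθ
      obtain ⟨h0, h1⟩ := hθ
      have hsin : k ≤ Real.sin θ := by
        rw [← hsinβ, ← Real.cos_pi_div_two_sub θ, ← Real.cos_pi_div_two_sub β]
        exact Real.cos_le_cos_of_nonneg_of_le_pi (by linarith) (by linarith) (by linarith)
      have : a ≤ |r * Real.sin θ| := by
        calc a = r * k := hrk.symm
          _ ≤ r * Real.sin θ := by nlinarith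
          _ ≤ |r * Real.sin θ| := le_abs_self _
      rw [hg]
      simp only
      rw [sTf_eq_zero this, mul_zero]
    rw [intervalIntegral.integral_congr hz]
    simp
  have mid : ∫ θ in α..β, g θ
      = a ^ 2 * (2 * β - π / 2) - a ^ 2 + 2 * a * Real.sqrt (r ^ 2 - a ^ 2) - r ^ 2 / 2 := by
    have hcong : EqOn g (fun θ => (a - r * Real.cos θ) * (a - r * Real.sin θ)) (uIcc α β) := by
      intro θ hθ
      rw [uIcc_of_le hαβ] at hθ
      obtain ⟨h0, h1⟩ := hθ
      have hθ0 : 0 ≤ θ := le_trans hα0 h0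
      have hθ2 : θ ≤ π/2 := le_trans h1 hβ2
      have hc0 : 0 ≤ Real.cos θ := Real.cos_nonneg_of_mem_Icc ⟨by linarith, hθ2⟩
      have hs0 : 0 ≤ Real.sin θ := Real.sin_nonneg_of_nonneg_of_le_pi hθ0 (by linarith)
      have hcu : Real.cos θ ≤ k := by
        rw [← hcosα]
        exact Real.cos_le_cos_of_nonneg_of_le_pi hα0 (by linarith) h0
      have hsu : Real.sin θ ≤ k := by
        rw [← hsinβ, ← Real.cos_pi_div_two_sub θ, ← Real.cos_pi_div_two_sub β]
        exact Real.cos_le_cos_of_nonneg_of_le_pi (by linarith) (by linarith) (by linarith)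
      have e1 : |r * Real.cos θ| = r * Real.cos θ := abs_of_nonneg (by positivity)
      have e2 : |r * Real.sin θ| = r * Real.sin θ := abs_of_nonneg (by positivity)
      rw [hg]
      simp only
      rw [sTf_eq (by rw [e1]; nlinarith), sTf_eq (by rw [e2]; nlinarith), e1, e2]
    rw [intervalIntegral.integral_congr hcong,
      intervalIntegral.integral_eq_sub_of_hasDerivAt (fun θ _ => st10_hasDeriv a r θ)
        (((continuous_const.sub (continuous_const.mul Real.continuous_cos)).mul
          (continuous_const.sub (continuous_const.mul Real.continuous_sin))).intervalIntegrable
            _ _)]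
    set s := Real.sqrt (r ^ 2 - a ^ 2) with hsdef
    have hsinα' : r * Real.sin α = s := by rw [hsinα]; field_simp
    have hcosβ' : r * Real.cos β = s := by rw [hcosβ]; field_simp
    have hsinβ' : r * Real.sin β = a := by rw [hsinβ]; exact hrk
    have hcosα' : r * Real.cos α = a := by rw [hcosα]; exact hrk
    show a ^ 2 * β - a * r * Real.sin β + a * r * Real.cos β + r ^ 2 * Real.sin β ^ 2 / 2
        - (a ^ 2 * α - a * r * Real.sin α + a * r * Real.cos α + r ^ 2 * Real.sin α ^ 2 / 2) = _
    rw [show a * r * Real.sin β = a * (r * Real.sin β) by ring, hsinβ',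
      show a * r * Real.cos β = a * (r * Real.cos β) by ring, hcosβ',
      show r ^ 2 * Real.sin β ^ 2 / 2 = (r * Real.sin β) ^ 2 / 2 by ring, hsinβ',
      show a * r * Real.sin α = a * (r * Real.sin α) by ring, hsinα',
      show a * r * Real.cos α = a * (r * Real.cos α) by ring, hcosα',
      show r ^ 2 * Real.sin α ^ 2 / 2 = (r * Real.sin α) ^ 2 / 2 by ring, hsinα',
      hs2, hαdef]
    ring
  rw [hsplit, z1, z3, mid, hβ]
  ring

noncomputable def sKf (a r : ℝ) : ℝ :=
  ∫ θ in Ioo (-π) π, sTf a (r * Real.cos θ) * sTf a (r * Real.sin θ)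

/-- fold the full angular integral onto the first quadrant -/
lemma sTf_neg (a u : ℝ) : sTf a (-u) = sTf a u := by simp [sTf]

lemma st10_fold (a r : ℝ) :
    sKf a r = 4 * ∫ θ in (0:ℝ)..(π/2), sTf a (r * Real.cos θ) * sTf a (r * Real.sin θ) := by
  set g := fun θ => sTf a (r * Real.cos θ) * sTf a (r * Real.sin θ) with hg
  have gc : Continuous g :=
    ((sTf_cont a).comp (continuous_const.mul Real.continuous_cos)).mul
      ((sTf_cont a).comp (continuous_const.mul Real.continuous_sin))
  have hii : ∀ u v : ℝ, IntervalIntegrable g volume u v := fun u v => gc.intervalIntegrable u v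
  have hpi : (0:ℝ) < π := pi_pos
  have e1 : ∫ θ in (-π)..(-(π/2)), g θ = ∫ x in (0:ℝ)..(π/2), g x := by
    have h := intervalIntegral.integral_comp_sub_right (a := 0) (b := π/2) g π
    rw [zero_sub, show π/2 - π = -(π/2) by ring] at h
    rw [← h]
    exact intervalIntegral.integral_congr fun x _ => by
      simp [hg, Real.cos_sub_pi, Real.sin_sub_pi, mul_neg, sTf_neg]
  have e2 : ∫ θ in (-(π/2))..0, g θ = ∫ x in (0:ℝ)..(π/2), g x := by
    have h := intervalIntegral.integral_comp_sub_right (a := 0) (b := π/2) g (π/2)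
    rw [zero_sub, sub_self] at h
    rw [← h]
    refine intervalIntegral.integral_congr fun x _ => ?_
    simp only [hg, Real.cos_sub_pi_div_two, Real.sin_sub_pi_div_two, mul_neg, sTf_neg]
    ring
  have e4 : ∫ θ in (π/2)..π, g θ = ∫ x in (0:ℝ)..(π/2), g x := by
    have h := intervalIntegral.integral_comp_add_right (a := 0) (b := π/2) g (π/2)
    rw [zero_add, show π/2 + π/2 = π by ring] at h
    rw [← h]
    refine intervalIntegral.integral_congr fun x _ => ?_
    simp only [hg, Real.cos_add_pi_div_two, Real.sin_add_pi_div_two, mul_neg, sTf_neg]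
    ring
  have : sKf a r = ∫ θ in (-π)..π, g θ := by
    rw [sKf, ← MeasureTheory.integral_Ioc_eq_integral_Ioo,
      ← intervalIntegral.integral_of_le (by linarith : (-π:ℝ) ≤ π)]
  rw [this, ← intervalIntegral.integral_add_adjacent_intervals (hii (-π) 0) (hii 0 π),
    ← intervalIntegral.integral_add_adjacent_intervals (hii (-π) (-(π/2))) (hii (-(π/2)) 0),
    ← intervalIntegral.integral_add_adjacent_intervals (hii 0 (π/2)) (hii (π/2) π),
    e1, e2, e4]
  ring

lemma st10_rK {a r : ℝ} (ha : 0 < a) (hr0 : 0 < r) (hr2 : r ≤ Real.sqrt 2 * a) :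
    r * sKf a r = a ^ 4 * fsquare r a := by
  by_cases hra : r ≤ a
  · rw [st10_fold, st10_I1 ha hr0 hra, fsquare, if_pos hra]
    field_simp
    ring
  · push_neg at hra
    rw [st10_fold, st10_I2 ha hra hr2, fsquare, if_neg (not_le.2 hra)]
    set s := Real.sqrt (r ^ 2 - a ^ 2) with hsdef
    have hs2 : s ^ 2 = r ^ 2 - a ^ 2 := Real.sq_sqrt (by nlinarith)
    have hs0 : 0 < s := Real.sqrt_pos.2 (by nlinarith)
    have e1 : Real.sqrt (r ^ 2 / a ^ 2 - 1) = s / a := by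
      rw [show r ^ 2 / a ^ 2 - 1 = (s / a) ^ 2 by rw [div_pow, hs2]; field_simp,
        Real.sqrt_sq (by positivity)]
    have e2 : Real.sqrt (1 - (2 - r ^ 2 / a ^ 2) ^ 2 / (r ^ 2 / a ^ 2) ^ 2)
        = 2 * s * a / r ^ 2 := by
      rw [show 1 - (2 - r ^ 2 / a ^ 2) ^ 2 / (r ^ 2 / a ^ 2) ^ 2 = (2 * s * a / r ^ 2) ^ 2 by
          field_simp
          nlinarith [hs2],
        Real.sqrt_sq (by positivity)]
    have e3 : Real.arcsin ((2 - r ^ 2 / a ^ 2) / (r ^ 2 / a ^ 2))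
        = 2 * Real.arcsin (a / r) - π / 2 := by
      have hb0 : 0 ≤ Real.arcsin (a / r) := Real.arcsin_nonneg.2 (by positivity)
      have hb2 : Real.arcsin (a / r) ≤ π / 2 := Real.arcsin_le_pi_div_two _
      rw [show (2 - r ^ 2 / a ^ 2) / (r ^ 2 / a ^ 2)
          = Real.sin (2 * Real.arcsin (a / r) - π / 2) from ?_,
        Real.arcsin_sin (by linarith) (by linarith)]
      rw [Real.sin_sub_pi_div_two, Real.cos_two_mul, Real.cos_sq',
        Real.sin_arcsin (le_trans (by norm_num : (-1:ℝ) ≤ 0) (by positivity))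
          (by rw [div_le_one hr0]; exact hra.le)]
      field_simp
      ring
    rw [e1, e2, e3]
    have hr4 : (0:ℝ) < r ^ 2 := by positivity
    field_simp
    linear_combination (4 * a) * hs2

set_option maxHeartbeats 2000000 in
/-- main identity over the standard square of side a -/
lemma st10_key (a : ℝ) (ha : 0 < a) (γ : ℝ → ℝ) (hγ : Measurable γ) (M : ℝ)
    (hM : ∀ x, 0 ≤ x → |γ x| ≤ M) :
    ∫ s in squareRegion a, ∫ t in squareRegion a, γ ‖s - t‖
      = ∫ r in Ioc 0 (Real.sqrt 2 * a), (fsquare r a * γ r) * a ^ 4 := by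
  have hMnn : 0 ≤ M := le_trans (abs_nonneg _) (hM 0 le_rfl)
  haveI instF : IsFiniteMeasure (volume.restrict (Icc (0:ℝ) a)) :=
    ⟨by rw [Measure.restrict_apply_univ]; simp [Real.volume_Icc]⟩
  -- transfer to ℝ × ℝ
  have transfer : ∀ F : EuclideanSpace ℝ (Fin 2) → ℝ,
      ∫ s in squareRegion a, F s
        = ∫ p in (Icc (0:ℝ) a ×ˢ Icc (0:ℝ) a), F (st10map.symm p) := by
    intro F
    rw [st10_sq_preimage]
    rw [← MeasurePreserving.setIntegral_preimage_emb st10map_mp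
      st10map.measurableEmbedding (fun p => F (st10map.symm p)) _]
    simp only [MeasurableEquiv.symm_apply_apply]
  have h1 : ∀ s : EuclideanSpace ℝ (Fin 2), (∫ t in squareRegion a, γ ‖s - t‖)
      = ∫ q in (Icc (0:ℝ) a ×ˢ Icc (0:ℝ) a), γ ‖s - st10map.symm q‖ :=
    fun s => transfer _
  simp_rw [h1]
  rw [transfer]
  simp_rw [st10_norm_symm]
  -- measurability of the core function
  have hsqrtm : Measurable (fun z : (ℝ × ℝ) × (ℝ × ℝ) =>
      γ (Real.sqrt ((z.1.1 - z.2.1) ^ 2 + (z.1.2 - z.2.2) ^ 2))) :=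
    hγ.comp ((Real.continuous_sqrt.measurable).comp
      (((measurable_fst.fst.sub measurable_snd.fst).pow_const 2).add
        ((measurable_fst.snd.sub measurable_snd.snd).pow_const 2)))
  have hboxm : MeasurableSet ((Icc (0:ℝ) a) ×ˢ (Icc (0:ℝ) a)) :=
    measurableSet_Icc.prod measurableSet_Icc
  have hboxfin : (volume.prod volume) ((Icc (0:ℝ) a) ×ˢ (Icc (0:ℝ) a)) ≠ ⊤ := by
    rw [Measure.prod_prod]
    exact ENNReal.mul_ne_top (by simp [Real.volume_Icc]) (by simp [Real.volume_Icc])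
  -- inner expansion
  have hinner : ∀ p1 p2 : ℝ,
      (∫ q in (Icc (0:ℝ) a) ×ˢ (Icc (0:ℝ) a),
        γ (Real.sqrt ((p1 - q.1) ^ 2 + (p2 - q.2) ^ 2)) ∂(volume.prod volume))
      = ∫ y1 in Icc (0:ℝ) a, ∫ y2 in Icc (0:ℝ) a,
          γ (Real.sqrt ((p1 - y1) ^ 2 + (p2 - y2) ^ 2)) := by
    intro p1 p2
    exact setIntegral_prod _ (st10_integrableOn hboxfin hboxm
      ((hsqrtm.comp (measurable_prodMk_left (x := (p1, p2)))).aestronglyMeasurable)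
      (fun q _ => hM _ (Real.sqrt_nonneg _)))
  -- outer expansion
  have hFint : IntegrableOn (fun p : ℝ × ℝ =>
      ∫ q in (Icc (0:ℝ) a) ×ˢ (Icc (0:ℝ) a),
        γ (Real.sqrt ((p.1 - q.1) ^ 2 + (p.2 - q.2) ^ 2)) ∂(volume.prod volume))
      ((Icc (0:ℝ) a) ×ˢ (Icc (0:ℝ) a)) (volume.prod volume) := by
    apply st10_integrableOn hboxfin hboxm
      ((hsqrtm.stronglyMeasurable.integral_prod_right').aestronglyMeasurable)
      (M := M * ((volume.prod volume) ((Icc (0:ℝ) a) ×ˢ (Icc (0:ℝ) a))).toReal)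
    intro p _
    rw [← Real.norm_eq_abs]
    apply norm_setIntegral_le_of_norm_le_const hboxfin.lt_top
    intro q _
    rw [Real.norm_eq_abs]
    exact hM _ (Real.sqrt_nonneg _)
  rw [Measure.volume_eq_prod, setIntegral_prod _ hFint]
  simp_rw [hinner]
  -- swap the two middle integrals
  have hswap : ∀ x1 : ℝ, (∫ x2 in Icc (0:ℝ) a, ∫ y1 in Icc (0:ℝ) a, ∫ y2 in Icc (0:ℝ) a,
      γ (Real.sqrt ((x1 - y1) ^ 2 + (x2 - y2) ^ 2)))
      = ∫ y1 in Icc (0:ℝ) a, ∫ x2 in Icc (0:ℝ) a, ∫ y2 in Icc (0:ℝ) a,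
          γ (Real.sqrt ((x1 - y1) ^ 2 + (x2 - y2) ^ 2)) := by
    intro x1
    apply MeasureTheory.integral_integral_swap
    apply st10_integrable (M := M * (volume (Icc (0:ℝ) a)).toReal)
    · apply StronglyMeasurable.aestronglyMeasurable
      apply MeasureTheory.StronglyMeasurable.integral_prod_right'
        (f := fun z : (ℝ × ℝ) × ℝ => γ (Real.sqrt ((x1 - z.1.2) ^ 2 + (z.1.1 - z.2) ^ 2)))
      exact Measurable.stronglyMeasurable (hγ.comp ((Real.continuous_sqrt.measurable).comp
        (((measurable_const.sub measurable_fst.snd).pow_const 2).add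
          ((measurable_fst.fst.sub measurable_snd).pow_const 2))))
    · intro z
      rw [← Real.norm_eq_abs]
      apply norm_setIntegral_le_of_norm_le_const
        (by simp [Real.volume_Icc] : volume (Icc (0:ℝ) a) < ⊤)
      intro y _
      rw [Real.norm_eq_abs]
      exact hM _ (Real.sqrt_nonneg _)
  rw [setIntegral_congr_fun measurableSet_Icc (fun x1 _ => hswap x1)]
  -- inner smoothing
  have hsm1 : ∀ u : ℝ, (∫ x2 in Icc (0:ℝ) a, ∫ y2 in Icc (0:ℝ) a,
      γ (Real.sqrt (u ^ 2 + (x2 - y2) ^ 2)))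
      = ∫ v, sTf a v * γ (Real.sqrt (u ^ 2 + v ^ 2)) :=
    fun u => st10_smooth a ha (fun d => γ (Real.sqrt (u ^ 2 + d ^ 2)))
      (hγ.comp ((Real.continuous_sqrt.comp
        (continuous_const.add (continuous_pow 2))).measurable)) M
      (fun d => hM _ (Real.sqrt_nonneg _))
  simp_rw [hsm1]
  -- outer smoothing
  have hWm : Measurable (fun z : ℝ × ℝ =>
      sTf a z.2 * γ (Real.sqrt (z.1 ^ 2 + z.2 ^ 2))) :=
    ((sTf_cont a).measurable.comp measurable_snd).mul (hγ.comp
      ((Real.continuous_sqrt.measurable).comp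
        ((measurable_fst.pow_const 2).add (measurable_snd.pow_const 2))))
  have hH0m : Measurable (fun d : ℝ => ∫ v, sTf a v * γ (Real.sqrt (d ^ 2 + v ^ 2))) := by
    apply MeasureTheory.StronglyMeasurable.measurable
    exact MeasureTheory.StronglyMeasurable.integral_prod_right'
      (f := fun z : ℝ × ℝ => sTf a z.2 * γ (Real.sqrt (z.1 ^ 2 + z.2 ^ 2)))
      hWm.stronglyMeasurable
  have hvanish : ∀ (d : ℝ) (v : ℝ), v ∉ Icc (-a:ℝ) a →
      sTf a v * γ (Real.sqrt (d ^ 2 + v ^ 2)) = 0 := by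
    intro d v hv
    rw [sTf_eq_zero (le_of_lt (not_le.mp (fun hh => hv (mem_Icc.mpr (abs_le.mp hh))))), zero_mul]
  have hH0b : ∀ d : ℝ, |∫ v, sTf a v * γ (Real.sqrt (d ^ 2 + v ^ 2))|
      ≤ a * M * (volume (Icc (-a:ℝ) a)).toReal := by
    intro d
    rw [← MeasureTheory.setIntegral_eq_integral_of_forall_compl_eq_zero (hvanish d)]
    rw [← Real.norm_eq_abs]
    apply norm_setIntegral_le_of_norm_le_const
      (by simp [Real.volume_Icc] : volume (Icc (-a:ℝ) a) < ⊤)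
    intro v _
    rw [Real.norm_eq_abs, abs_mul]
    exact mul_le_mul (sTf_abs_le ha.le v) (hM _ (Real.sqrt_nonneg _)) (abs_nonneg _) ha.le
  have hsm2 : ∫ x in Icc (0:ℝ) a, ∫ y in Icc (0:ℝ) a,
      (∫ v, sTf a v * γ (Real.sqrt ((x - y) ^ 2 + v ^ 2)))
      = ∫ u, sTf a u * ∫ v, sTf a v * γ (Real.sqrt (u ^ 2 + v ^ 2)) :=
    st10_smooth a ha (fun d => ∫ v, sTf a v * γ (Real.sqrt (d ^ 2 + v ^ 2))) hH0m _ hH0b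
  rw [hsm2]
  have hpull : ∀ u : ℝ, sTf a u * (∫ v, sTf a v * γ (Real.sqrt (u ^ 2 + v ^ 2)))
      = ∫ v, sTf a u * (sTf a v * γ (Real.sqrt (u ^ 2 + v ^ 2))) := fun u =>
    (MeasureTheory.integral_const_mul _ _).symm
  simp_rw [hpull]
  -- pass to the plane and polar coordinates
  have hW2m : Measurable (fun z : ℝ × ℝ =>
      sTf a z.1 * (sTf a z.2 * γ (Real.sqrt (z.1 ^ 2 + z.2 ^ 2)))) :=
    ((sTf_cont a).measurable.comp measurable_fst).mul hWm
  have habs0 : ∀ v : ℝ, v ∉ Icc (-a:ℝ) a → sTf a v = 0 := fun v hv =>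
    sTf_eq_zero (le_of_lt (not_le.mp (fun hh => hv (mem_Icc.mpr (abs_le.mp hh)))))
  have hWu : Integrable (Function.uncurry fun u v =>
      sTf a u * (sTf a v * γ (Real.sqrt (u ^ 2 + v ^ 2)))) (volume.prod volume) := by
    have huneq : (Function.uncurry fun u v =>
        sTf a u * (sTf a v * γ (Real.sqrt (u ^ 2 + v ^ 2))))
        = fun z : ℝ × ℝ => sTf a z.1 * (sTf a z.2 * γ (Real.sqrt (z.1 ^ 2 + z.2 ^ 2))) := rfl
    rw [huneq]
    have hWeq : (fun z : ℝ × ℝ => sTf a z.1 * (sTf a z.2 * γ (Real.sqrt (z.1 ^ 2 + z.2 ^ 2))))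
        = ((Icc (-a:ℝ) a) ×ˢ (Icc (-a:ℝ) a)).indicator
          (fun z => sTf a z.1 * (sTf a z.2 * γ (Real.sqrt (z.1 ^ 2 + z.2 ^ 2)))) := by
      funext z
      by_cases hz : z ∈ (Icc (-a:ℝ) a) ×ˢ (Icc (-a:ℝ) a)
      · rw [indicator_of_mem hz]
      · rw [indicator_of_notMem hz]
        by_cases hz1 : z.1 ∈ Icc (-a:ℝ) a
        · have hz2 : z.2 ∉ Icc (-a:ℝ) a := fun h2 => hz (Set.mem_prod.mpr ⟨hz1, h2⟩)
          rw [habs0 z.2 hz2, zero_mul, mul_zero]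
        · rw [habs0 z.1 hz1, zero_mul]
    rw [hWeq, integrable_indicator_iff (measurableSet_Icc.prod measurableSet_Icc)]
    apply st10_integrableOn (M := a * (a * M)) ?_
      (measurableSet_Icc.prod measurableSet_Icc) hW2m.aestronglyMeasurable
    · intro z _
      rw [abs_mul, abs_mul]
      exact mul_le_mul (sTf_abs_le ha.le _)
        (mul_le_mul (sTf_abs_le ha.le _) (hM _ (Real.sqrt_nonneg _)) (abs_nonneg _) ha.le)
        (by positivity) ha.le
    · rw [Measure.prod_prod]
      exact ENNReal.mul_ne_top (by simp [Real.volume_Icc]) (by simp [Real.volume_Icc])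
  have step : ∫ u, ∫ v, sTf a u * (sTf a v * γ (Real.sqrt (u ^ 2 + v ^ 2)))
      = ∫ p in polarCoord.target, p.1 • ((fun z : ℝ × ℝ =>
          sTf a z.1 * (sTf a z.2 * γ (Real.sqrt (z.1 ^ 2 + z.2 ^ 2)))) (polarCoord.symm p)) := by
    rw [MeasureTheory.integral_integral hWu, ← Measure.volume_eq_prod,
      ← integral_comp_polarCoord_symm]
  rw [step, polarCoord_target]
  have hpt : EqOn (fun p : ℝ × ℝ => p.1 • ((fun z : ℝ × ℝ =>
        sTf a z.1 * (sTf a z.2 * γ (Real.sqrt (z.1 ^ 2 + z.2 ^ 2)))) (polarCoord.symm p)))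
      (fun p : ℝ × ℝ => p.1 * (sTf a (p.1 * Real.cos p.2)
        * (sTf a (p.1 * Real.sin p.2) * γ p.1)))
      ((Ioi (0:ℝ)) ×ˢ (Ioo (-π) π)) := by
    intro p hp
    have hp1 : 0 < p.1 := hp.1
    simp only [polarCoord_symm_apply, smul_eq_mul]
    rw [show (p.1 * Real.cos p.2) ^ 2 + (p.1 * Real.sin p.2) ^ 2 = p.1 ^ 2 from by
        linear_combination (p.1 ^ 2) * (Real.sin_sq_add_cos_sq p.2),
      Real.sqrt_sq hp1.le]
  rw [setIntegral_congr_fun (measurableSet_Ioi.prod measurableSet_Ioo) hpt]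
  -- Fubini in polar coordinates
  have hJm : Measurable (fun p : ℝ × ℝ => p.1 * (sTf a (p.1 * Real.cos p.2)
      * (sTf a (p.1 * Real.sin p.2) * γ p.1))) := by
    apply measurable_fst.mul
    apply Measurable.mul
    · exact (sTf_cont a).measurable.comp (measurable_fst.mul
        (Real.continuous_cos.measurable.comp measurable_snd))
    · exact ((sTf_cont a).measurable.comp (measurable_fst.mul
        (Real.continuous_sin.measurable.comp measurable_snd))).mul (hγ.comp measurable_fst)
  have hIntJ : IntegrableOn (fun p : ℝ × ℝ => p.1 * (sTf a (p.1 * Real.cos p.2)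
      * (sTf a (p.1 * Real.sin p.2) * γ p.1))) ((Ioi (0:ℝ)) ×ˢ (Ioo (-π) π))
      (volume.prod volume) := by
    rw [show Ioi (0:ℝ) = Ioc 0 (Real.sqrt 2 * a) ∪ Ioi (Real.sqrt 2 * a) from
      (Ioc_union_Ioi_eq_Ioi (by positivity)).symm, union_prod]
    apply IntegrableOn.union
    · apply st10_integrableOn (M := (Real.sqrt 2 * a) * (a * (a * M))) ?_
        (measurableSet_Ioc.prod measurableSet_Ioo) hJm.aestronglyMeasurable
      · rintro p ⟨hp1, hp2⟩
        rw [abs_mul, abs_mul, abs_mul]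
        have hb1 : |p.1| ≤ Real.sqrt 2 * a := by rw [abs_of_pos hp1.1]; exact hp1.2
        refine mul_le_mul hb1 ?_ (by positivity) (by positivity)
        refine mul_le_mul (sTf_abs_le ha.le _) ?_ (by positivity) ha.le
        exact mul_le_mul (sTf_abs_le ha.le _) (hM _ hp1.1.le) (abs_nonneg _) ha.le
      · rw [Measure.prod_prod]
        exact ENNReal.mul_ne_top (by simp [Real.volume_Ioc, ENNReal.mul_eq_top]) (by simp [Real.volume_Ioo])
    · have hzero : EqOn (fun p : ℝ × ℝ => p.1 * (sTf a (p.1 * Real.cos p.2)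
          * (sTf a (p.1 * Real.sin p.2) * γ p.1))) (fun _ => (0:ℝ))
          ((Ioi (Real.sqrt 2 * a)) ×ˢ (Ioo (-π) π)) := by
        rintro p ⟨hp1, hp2⟩
        have h0 := st10_Tzero ha (le_of_lt hp1) p.2
        show p.1 * (sTf a (p.1 * Real.cos p.2) * (sTf a (p.1 * Real.sin p.2) * γ p.1)) = 0
        rw [show sTf a (p.1 * Real.cos p.2) * (sTf a (p.1 * Real.sin p.2) * γ p.1)
            = (sTf a (p.1 * Real.cos p.2) * sTf a (p.1 * Real.sin p.2)) * γ p.1 from by ring,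
          h0, zero_mul, mul_zero]
      rw [integrableOn_congr_fun hzero (measurableSet_Ioi.prod measurableSet_Ioo)]
      exact integrableOn_zero
  rw [Measure.volume_eq_prod, setIntegral_prod _ hIntJ]
  have hinner2 : ∀ r : ℝ, (∫ θ in Ioo (-π) π, r * (sTf a (r * Real.cos θ)
      * (sTf a (r * Real.sin θ) * γ r)))
      = (γ r * r) * sKf a r := by
    intro r
    have hring : ∀ θ : ℝ, r * (sTf a (r * Real.cos θ) * (sTf a (r * Real.sin θ) * γ r))
        = (γ r * r) * (sTf a (r * Real.cos θ) * sTf a (r * Real.sin θ)) := fun θ => by ring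
    simp_rw [hring]
    rw [MeasureTheory.integral_const_mul, sKf]
  simp_rw [hinner2]
  -- marginal integrability and splitting
  have hmarg : IntegrableOn (fun r => (γ r * r) * sKf a r) (Ioi (0:ℝ)) volume := by
    have h := hIntJ
    rw [IntegrableOn, ← Measure.prod_restrict] at h
    have h2 := h.integral_prod_left
    apply h2.congr
    exact ae_of_all _ fun r => hinner2 r
  rw [← Ioc_union_Ioi_eq_Ioi (by positivity : (0:ℝ) ≤ Real.sqrt 2 * a),
    setIntegral_union (Ioc_disjoint_Ioi le_rfl) measurableSet_Ioi
      (hmarg.mono_set (fun x hx => hx.1)) (hmarg.mono_set (Ioi_subset_Ioi (by positivity)))]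
  have hzero2 : ∫ r in Ioi (Real.sqrt 2 * a), (γ r * r) * sKf a r = 0 := by
    have hz : EqOn (fun r => (γ r * r) * sKf a r) (fun _ => (0:ℝ))
        (Ioi (Real.sqrt 2 * a)) := by
      intro r hr
      have hK : sKf a r = 0 := by
        rw [sKf, setIntegral_congr_fun measurableSet_Ioo
          (fun θ _ => st10_Tzero ha (le_of_lt hr) θ)]
        exact integral_zero _ _
      show (γ r * r) * sKf a r = 0
      rw [hK, mul_zero]
    rw [setIntegral_congr_fun measurableSet_Ioi hz]
    exact integral_zero _ _
  rw [hzero2, add_zero]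
  apply setIntegral_congr_fun measurableSet_Ioc
  intro r hr
  have hrk := st10_rK ha hr.1 hr.2
  show (γ r * r) * sKf a r = (fsquare r a * γ r) * a ^ 4
  linear_combination (γ r) * hrk

lemma st10_fsquare_scale {l R : ℝ} (hl : 0 < l) (hR : 0 < R) (h : ℝ) :
    fsquare h R = l * fsquare (l * h) (l * R) := by
  have hrat : (l * h) ^ 2 / (l * R) ^ 2 = h ^ 2 / R ^ 2 := by
    rw [mul_pow, mul_pow, mul_div_mul_left _ _ (by positivity : (l:ℝ) ^ 2 ≠ 0)]
  unfold fsquare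
  rw [hrat]
  by_cases hc : h ≤ R
  · rw [if_pos hc, if_pos ((mul_le_mul_iff_right₀ hl).2 hc)]
    field_simp
  · rw [if_neg hc, if_neg (fun hcc => hc ((mul_le_mul_iff_right₀ hl).1 hcc))]
    have hpre : l * (2 * (l * h) / (l * R) ^ 2) = 2 * h / R ^ 2 := by
      field_simp
    rw [← mul_assoc, hpre]

/-- Scaling identity: for the square `A = [0,R]²`, `λ > 0` and a bounded measurable `γ`,
the normalized double integral of `γ(‖s - t‖)` over `λA × λA` equals
`∫_0^{√2 R} fsquare(h,R) γ(λh) dh`. -/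
theorem stmt_10 (R l : ℝ) (hR : 0 < R) (hl : 0 < l) (γ : ℝ → ℝ)
    (hmeas : Measurable γ) (hbdd : ∃ M, ∀ h : ℝ, 0 ≤ h → |γ h| ≤ M) :
    ((volume (l • squareRegion R)).toReal ^ 2)⁻¹ *
        (∫ s in l • squareRegion R, ∫ t in l • squareRegion R, γ ‖s - t‖)
      = ∫ h in Set.Icc 0 (Real.sqrt 2 * R), fsquare h R * γ (l * h) := by
  obtain ⟨M, hM⟩ := hbdd
  set a := l * R with ha_def
  have ha : 0 < a := mul_pos hl hR
  rw [st10_smul_square hl]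
  rw [st10_key a ha γ hmeas M hM]
  rw [st10_vol_square ha.le]
  -- LHS normalization
  have hvol : ((ENNReal.ofReal a * ENNReal.ofReal a).toReal ^ 2)⁻¹ = (a ^ 4)⁻¹ := by
    rw [ENNReal.toReal_mul, ENNReal.toReal_ofReal ha.le]
    ring_nf
  rw [hvol]
  rw [MeasureTheory.integral_mul_const]
  have hlhs : (a ^ 4)⁻¹ * ((∫ r in Ioc 0 (Real.sqrt 2 * a), fsquare r a * γ r) * a ^ 4)
      = ∫ r in Ioc 0 (Real.sqrt 2 * a), fsquare r a * γ r := by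
    field_simp
  rw [hlhs]
  -- RHS transformation
  rw [MeasureTheory.integral_Icc_eq_integral_Ioc,
    ← intervalIntegral.integral_of_le (by positivity : (0:ℝ) ≤ Real.sqrt 2 * R)]
  have hpt : ∀ h : ℝ, fsquare h R * γ (l * h)
      = l * (fsquare (h * l) (l * R) * γ (h * l)) := by
    intro h
    rw [st10_fsquare_scale hl hR h, mul_comm l h]
    ring
  simp_rw [hpt]
  rw [intervalIntegral.integral_const_mul,
    intervalIntegral.integral_comp_mul_right (fun x => fsquare x (l * R) * γ x) hl.ne',
    zero_mul, show Real.sqrt 2 * R * l = Real.sqrt 2 * a by rw [ha_def]; ring,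
    intervalIntegral.integral_of_le (by positivity : (0:ℝ) ≤ Real.sqrt 2 * a),
    smul_eq_mul, mul_inv_cancel_left₀ hl.ne', ← ha_def]
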